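/- Let p be an odd prime and ε a non-square in 𝔽_p. The index of the subgroup C_{ns+} ∩ C_{s+} in the group C_{ns+} equals (p + 1)/2; equivalently, 2 · |C_{ns+} ∩ C_{s+}| · (p + 1)/2 = 2 · |C_{ns+}|, i.e., |C_{ns+}| = ((p+1)/2) · |C_{ns+} ∩ C_{s+}| where (p+1)/2 denotes the natural number (p+1)/2. -/

import Mathlib

/-- The non-split Cartan set inside `GL₂(𝔽_p)`: invertible matrices of the
form `(a b; εb a)`. -/
def CnsSet (p : ℕ) [Fact (Nat.Prime p)] (ε : ZMod p) : Set (GL (Fin 2) (ZMod p)) :=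
  {M | (M : Matrix (Fin 2) (Fin 2) (ZMod p)) 1 1 = (M : Matrix (Fin 2) (Fin 2) (ZMod p)) 0 0 ∧
       (M : Matrix (Fin 2) (Fin 2) (ZMod p)) 1 0 = ε * (M : Matrix (Fin 2) (Fin 2) (ZMod p)) 0 1}

/-- Invertible matrices of the form `(a b; -εb -a)`. -/
def CnsOtherSet (p : ℕ) [Fact (Nat.Prime p)] (ε : ZMod p) : Set (GL (Fin 2) (ZMod p)) :=
  {M | (M : Matrix (Fin 2) (Fin 2) (ZMod p)) 1 1 = -(M : Matrix (Fin 2) (Fin 2) (ZMod p)) 0 0 ∧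
       (M : Matrix (Fin 2) (Fin 2) (ZMod p)) 1 0 = -ε * (M : Matrix (Fin 2) (Fin 2) (ZMod p)) 0 1}

/-- `C_{ns+} = C_ns ∪ {(a b; -εb -a)}`. -/
def CnsPlusSet (p : ℕ) [Fact (Nat.Prime p)] (ε : ZMod p) : Set (GL (Fin 2) (ZMod p)) :=
  CnsSet p ε ∪ CnsOtherSet p ε

/-- The split Cartan set: invertible diagonal matrices. -/
def CsSet (p : ℕ) [Fact (Nat.Prime p)] : Set (GL (Fin 2) (ZMod p)) :=
  {M | (M : Matrix (Fin 2) (Fin 2) (ZMod p)) 0 1 = 0 ∧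
       (M : Matrix (Fin 2) (Fin 2) (ZMod p)) 1 0 = 0}

/-- Invertible antidiagonal matrices. -/
def AntidiagSet (p : ℕ) [Fact (Nat.Prime p)] : Set (GL (Fin 2) (ZMod p)) :=
  {M | (M : Matrix (Fin 2) (Fin 2) (ZMod p)) 0 0 = 0 ∧
       (M : Matrix (Fin 2) (Fin 2) (ZMod p)) 1 1 = 0}

/-- `C_{s+} = C_s ∪ {invertible antidiagonal matrices}`. -/
def CsPlusSet (p : ℕ) [Fact (Nat.Prime p)] : Set (GL (Fin 2) (ZMod p)) :=
  CsSet p ∪ AntidiagSet p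

section Aux

variable {p : ℕ} [Fact (Nat.Prime p)]

@[simp] lemma coe_mkOfDetNeZero (A : Matrix (Fin 2) (Fin 2) (ZMod p)) (h : A.det ≠ 0) :
    ((Matrix.GeneralLinearGroup.mkOfDetNeZero A h : GL (Fin 2) (ZMod p))
      : Matrix (Fin 2) (Fin 2) (ZMod p)) = A := rfl

lemma glDetNeZero (M : GL (Fin 2) (ZMod p)) :
    ((M : Matrix (Fin 2) (Fin 2) (ZMod p))).det ≠ 0 :=
  ((Matrix.isUnit_iff_isUnit_det _).mp M.isUnit).ne_zero

/-- Generic parametrized counting lemma. -/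
lemma card_param {α : Type*} [Zero α] (S : Set (GL (Fin 2) (ZMod p)))
    (f : α → Matrix (Fin 2) (Fin 2) (ZMod p))
    (h1 : ∀ x : α, x ≠ 0 → (f x).det ≠ 0)
    (h2 : ∀ (x : α) (hx : x ≠ 0),
      Matrix.GeneralLinearGroup.mkOfDetNeZero (f x) (h1 x hx) ∈ S)
    (h3 : ∀ M ∈ S, ∃ x : α, x ≠ 0 ∧ (M : Matrix (Fin 2) (Fin 2) (ZMod p)) = f x)
    (h4 : Function.Injective f) :
    Nat.card S = Nat.card {x : α // x ≠ 0} := by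
  refine (Nat.card_eq_of_bijective
    (fun x : {x : α // x ≠ 0} =>
      (⟨Matrix.GeneralLinearGroup.mkOfDetNeZero (f x.1) (h1 x.1 x.2), h2 x.1 x.2⟩ : S))
    ⟨?_, ?_⟩).symm
  · intro x y hxy
    apply Subtype.ext
    apply h4
    exact congrArg (fun M : S => ((M : GL (Fin 2) (ZMod p)) : Matrix (Fin 2) (Fin 2) (ZMod p))) hxy
  · rintro ⟨M, hM⟩
    obtain ⟨x, hx, hMx⟩ := h3 M hM
    exact ⟨⟨x, hx⟩, Subtype.ext (Units.ext hMx.symm)⟩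

lemma card_ne_aux {α : Type*} [Fintype α] [DecidableEq α] (a : α) :
    Nat.card {x : α // x ≠ a} = Fintype.card α - 1 := by
  rw [Nat.card_eq_fintype_card]
  calc Fintype.card {x : α // x ≠ a}
      = Fintype.card α - Fintype.card {x : α // x = a} := Fintype.card_subtype_compl _
    _ = Fintype.card α - 1 := by rw [Fintype.card_subtype_eq]

lemma card_ne_zero_zmod : Nat.card {x : ZMod p // x ≠ 0} = p - 1 := by
  rw [card_ne_aux, ZMod.card]

lemma card_ne_zero_zmod2 : Nat.card {q : ZMod p × ZMod p // q ≠ 0} = p ^ 2 - 1 := by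
  rw [card_ne_aux, Fintype.card_prod, ZMod.card]
  ring_nf

variable {ε : ZMod p} (hε : ¬ ∃ x : ZMod p, x ^ 2 = ε)

include hε in
lemma key_det (a b : ZMod p) (h : a * a - b * (ε * b) = 0) : a = 0 ∧ b = 0 := by
  by_cases hb : b = 0
  · subst hb
    simp only [mul_zero, zero_mul, sub_zero] at h
    exact ⟨mul_self_eq_zero.mp h, rfl⟩
  · exfalso
    apply hε
    refine ⟨a * b⁻¹, ?_⟩
    have h2 : a ^ 2 = ε * b ^ 2 := by linear_combination h
    rw [mul_pow, h2, mul_assoc, ← mul_pow, mul_inv_cancel₀ hb, one_pow, mul_one]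

include hε in
lemma eps_ne_zero : ε ≠ 0 := fun h => hε ⟨0, by simp [h]⟩

end Aux

section Counts

variable {p : ℕ} [Fact (Nat.Prime p)] {ε : ZMod p} (hε : ¬ ∃ x : ZMod p, x ^ 2 = ε)

include hε in
lemma card_CnsSet : Nat.card (CnsSet p ε) = p ^ 2 - 1 := by
  rw [← card_ne_zero_zmod2 (p := p)]
  refine card_param (CnsSet p ε) (fun q => !![q.1, q.2; ε * q.2, q.1]) ?_ ?_ ?_ ?_
  · rintro ⟨a, b⟩ hq hdet
    rw [Matrix.det_fin_two_of] at hdet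
    obtain ⟨ha, hb⟩ := key_det hε a b hdet
    exact hq (Prod.ext ha hb)
  · rintro ⟨a, b⟩ hq
    constructor <;> simp [CnsSet]
  · intro M hM
    obtain ⟨h11, h10⟩ := hM
    refine ⟨((M : Matrix (Fin 2) (Fin 2) (ZMod p)) 0 0,
             (M : Matrix (Fin 2) (Fin 2) (ZMod p)) 0 1), ?_, ?_⟩
    · intro h0
      rw [Prod.mk_eq_zero] at h0
      apply glDetNeZero M
      rw [Matrix.det_fin_two, h11, h10, h0.1, h0.2]
      ring
    · ext i j
      fin_cases i <;> fin_cases j <;> simp [h11, h10]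
  · rintro ⟨a, b⟩ ⟨c, d⟩ h
    have h1 := congrFun (congrFun h 0) 0
    have h2 := congrFun (congrFun h 0) 1
    simp only [Matrix.cons_val', Matrix.cons_val_zero, Matrix.cons_val_one, Matrix.head_cons,
      Matrix.empty_val', Matrix.cons_val_fin_one, Matrix.head_fin_const] at h1 h2
    exact Prod.ext h1 h2

include hε in
lemma card_CnsOtherSet : Nat.card (CnsOtherSet p ε) = p ^ 2 - 1 := by
  rw [← card_ne_zero_zmod2 (p := p)]
  refine card_param (CnsOtherSet p ε) (fun q => !![q.1, q.2; -(ε * q.2), -q.1]) ?_ ?_ ?_ ?_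
  · rintro ⟨a, b⟩ hq hdet
    rw [Matrix.det_fin_two_of] at hdet
    have h' : a * a - b * (ε * b) = 0 := by linear_combination -hdet
    obtain ⟨ha, hb⟩ := key_det hε a b h'
    exact hq (Prod.ext ha hb)
  · rintro ⟨a, b⟩ hq
    constructor <;> simp [CnsOtherSet]
  · intro M hM
    obtain ⟨h11, h10⟩ := hM
    refine ⟨((M : Matrix (Fin 2) (Fin 2) (ZMod p)) 0 0,
             (M : Matrix (Fin 2) (Fin 2) (ZMod p)) 0 1), ?_, ?_⟩
    · intro h0
      rw [Prod.mk_eq_zero] at h0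
      apply glDetNeZero M
      rw [Matrix.det_fin_two, h11, h10, h0.1, h0.2]
      ring
    · ext i j
      fin_cases i <;> fin_cases j <;> simp [h11, h10]
  · rintro ⟨a, b⟩ ⟨c, d⟩ h
    have h1 := congrFun (congrFun h 0) 0
    have h2 := congrFun (congrFun h 0) 1
    simp only [Matrix.cons_val', Matrix.cons_val_zero, Matrix.cons_val_one, Matrix.head_cons,
      Matrix.empty_val', Matrix.cons_val_fin_one, Matrix.head_fin_const] at h1 h2
    exact Prod.ext h1 h2

include hε in
lemma card_P1 : Nat.card (CnsSet p ε ∩ CsSet p : Set (GL (Fin 2) (ZMod p))) = p - 1 := by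
  rw [← card_ne_zero_zmod (p := p)]
  refine card_param _ (fun x => !![x, 0; 0, x]) ?_ ?_ ?_ ?_
  · intro x hx hdet
    rw [Matrix.det_fin_two_of] at hdet
    simp only [mul_zero, sub_zero] at hdet
    exact hx (mul_self_eq_zero.mp hdet)
  · intro x hx
    refine ⟨⟨?_, ?_⟩, ⟨?_, ?_⟩⟩ <;> simp
  · intro M hM
    obtain ⟨⟨h11, _⟩, h01, h10⟩ := hM
    refine ⟨(M : Matrix (Fin 2) (Fin 2) (ZMod p)) 0 0, ?_, ?_⟩
    · intro h0
      apply glDetNeZero M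
      rw [Matrix.det_fin_two, h11, h01, h0]
      ring
    · ext i j
      fin_cases i <;> fin_cases j <;> simp [h11, h01, h10]
  · intro x y h
    simpa using congrFun (congrFun h 0) 0

include hε in
lemma card_P2 : Nat.card (CnsSet p ε ∩ AntidiagSet p : Set (GL (Fin 2) (ZMod p))) = p - 1 := by
  rw [← card_ne_zero_zmod (p := p)]
  refine card_param _ (fun x => !![0, x; ε * x, 0]) ?_ ?_ ?_ ?_
  · intro x hx hdet
    rw [Matrix.det_fin_two_of] at hdet
    simp only [zero_mul, mul_comm, zero_sub, neg_eq_zero] at hdet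
    rcases mul_eq_zero.mp hdet with h | h
    · exact hx h
    · exact (mul_eq_zero.mp h).elim (fun h => eps_ne_zero hε h) hx
  · intro x hx
    refine ⟨⟨?_, ?_⟩, ⟨?_, ?_⟩⟩ <;> simp
  · intro M hM
    obtain ⟨⟨h11, h10⟩, h00, h11'⟩ := hM
    refine ⟨(M : Matrix (Fin 2) (Fin 2) (ZMod p)) 0 1, ?_, ?_⟩
    · intro h0
      apply glDetNeZero M
      rw [Matrix.det_fin_two, h00, h0]
      ring
    · ext i j
      fin_cases i <;> fin_cases j <;> simp [h11', h00, h10]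
  · intro x y h
    simpa using congrFun (congrFun h 0) 1

include hε in
lemma card_P3 : Nat.card (CnsOtherSet p ε ∩ CsSet p : Set (GL (Fin 2) (ZMod p))) = p - 1 := by
  rw [← card_ne_zero_zmod (p := p)]
  refine card_param _ (fun x => !![x, 0; 0, -x]) ?_ ?_ ?_ ?_
  · intro x hx hdet
    rw [Matrix.det_fin_two_of] at hdet
    simp only [mul_neg, zero_mul, sub_zero, neg_eq_zero] at hdet
    exact hx (mul_self_eq_zero.mp hdet)
  · intro x hx
    refine ⟨⟨?_, ?_⟩, ⟨?_, ?_⟩⟩ <;> simp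
  · intro M hM
    obtain ⟨⟨h11, _⟩, h01, h10⟩ := hM
    refine ⟨(M : Matrix (Fin 2) (Fin 2) (ZMod p)) 0 0, ?_, ?_⟩
    · intro h0
      apply glDetNeZero M
      rw [Matrix.det_fin_two, h11, h01, h0]
      ring
    · ext i j
      fin_cases i <;> fin_cases j <;> simp [h11, h01, h10]
  · intro x y h
    simpa using congrFun (congrFun h 0) 0

include hε in
lemma card_P4 : Nat.card (CnsOtherSet p ε ∩ AntidiagSet p : Set (GL (Fin 2) (ZMod p))) = p - 1 := by
  rw [← card_ne_zero_zmod (p := p)]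
  refine card_param _ (fun x => !![0, x; -(ε * x), 0]) ?_ ?_ ?_ ?_
  · intro x hx hdet
    rw [Matrix.det_fin_two_of] at hdet
    simp only [zero_mul, zero_sub, mul_neg, neg_neg] at hdet
    rcases mul_eq_zero.mp hdet with h | h
    · exact hx h
    · exact (mul_eq_zero.mp h).elim (fun h => eps_ne_zero hε h) hx
  · intro x hx
    refine ⟨⟨?_, ?_⟩, ⟨?_, ?_⟩⟩ <;> simp
  · intro M hM
    obtain ⟨⟨h11, h10⟩, h00, h11'⟩ := hM
    refine ⟨(M : Matrix (Fin 2) (Fin 2) (ZMod p)) 0 1, ?_, ?_⟩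
    · intro h0
      apply glDetNeZero M
      rw [Matrix.det_fin_two, h00, h0]
      ring
    · ext i j
      fin_cases i <;> fin_cases j <;> simp [h11', h00, h10]
  · intro x y h
    simpa using congrFun (congrFun h 0) 1

end Counts

section Disj

variable {p : ℕ} [Fact (Nat.Prime p)] {ε : ZMod p}

lemma not_Cs_Antidiag (M : GL (Fin 2) (ZMod p)) (h1 : M ∈ CsSet p)
    (h2 : M ∈ AntidiagSet p) : False := by
  apply glDetNeZero M
  rw [Matrix.det_fin_two, h1.1, h2.1]
  ring

lemma not_Cns_CnsOther (hp : Odd p) (hε : ¬ ∃ x : ZMod p, x ^ 2 = ε)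
    (M : GL (Fin 2) (ZMod p)) (h1 : M ∈ CnsSet p ε) (h2 : M ∈ CnsOtherSet p ε) : False := by
  have h2ne : (2 : ZMod p) ≠ 0 := by
    have hpne : p ≠ 2 := by
      rintro rfl
      exact (Nat.not_odd_iff_even.mpr (by norm_num)) hp
    intro h
    have := (ZMod.natCast_eq_zero_iff 2 p).mp (by exact_mod_cast h)
    exact hpne ((Nat.prime_dvd_prime_iff_eq Fact.out (by norm_num)).mp this)
  have h00 : (M : Matrix (Fin 2) (Fin 2) (ZMod p)) 0 0 = 0 := by
    have := h1.1.symm.trans h2.1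
    have h2' : 2 * (M : Matrix (Fin 2) (Fin 2) (ZMod p)) 0 0 = 0 := by linear_combination this
    exact (mul_eq_zero.mp h2').resolve_left h2ne
  have h01 : (M : Matrix (Fin 2) (Fin 2) (ZMod p)) 0 1 = 0 := by
    have := h1.2.symm.trans h2.2
    have h2' : 2 * ε * (M : Matrix (Fin 2) (Fin 2) (ZMod p)) 0 1 = 0 := by linear_combination this
    rcases mul_eq_zero.mp h2' with h | h
    · exact absurd ((mul_eq_zero.mp h).resolve_left h2ne) (eps_ne_zero hε)
    · exact h
  apply glDetNeZero M
  rw [Matrix.det_fin_two, h1.1, h1.2, h00, h01]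
  ring

end Disj

theorem index_of_intersection_in_nonsplit_plus (p : ℕ) [Fact (Nat.Prime p)]
    (hp : Odd p) (ε : ZMod p) (hε : ¬ ∃ x : ZMod p, x ^ 2 = ε)
    (Hns Hs : Subgroup (GL (Fin 2) (ZMod p)))
    (hHns : (Hns : Set (GL (Fin 2) (ZMod p))) = CnsPlusSet p ε)
    (hHs : (Hs : Set (GL (Fin 2) (ZMod p))) = CsPlusSet p) :
    (Hns ⊓ Hs).relIndex Hns = (p + 1) / 2 ∧
    Nat.card Hns = ((p + 1) / 2) * Nat.card (Hns ⊓ Hs : Subgroup (GL (Fin 2) (ZMod p))) := by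
  -- cardinal of Hns
  have hd0 : Disjoint (CnsSet p ε) (CnsOtherSet p ε) :=
    Set.disjoint_left.mpr (fun M h1 h2 => not_Cns_CnsOther hp hε M h1 h2)
  have hdCsA : Disjoint (CsSet p) (AntidiagSet p) :=
    Set.disjoint_left.mpr (fun M h1 h2 => not_Cs_Antidiag M h1 h2)
  have cardHns : Nat.card Hns = 2 * (p ^ 2 - 1) := by
    calc Nat.card Hns = ((Hns : Set (GL (Fin 2) (ZMod p)))).ncard :=
          (Nat.card_coe_set_eq _).symm
      _ = (CnsPlusSet p ε).ncard := by rw [hHns]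
      _ = (CnsSet p ε).ncard + (CnsOtherSet p ε).ncard := Set.ncard_union_eq hd0
      _ = 2 * (p ^ 2 - 1) := by
          rw [← Nat.card_coe_set_eq, ← Nat.card_coe_set_eq,
            card_CnsSet hε, card_CnsOtherSet hε]
          ring
  -- cardinal of the intersection
  have hSdecomp : CnsPlusSet p ε ∩ CsPlusSet p =
      ((CnsSet p ε ∩ CsSet p) ∪ (CnsSet p ε ∩ AntidiagSet p)) ∪
      ((CnsOtherSet p ε ∩ CsSet p) ∪ (CnsOtherSet p ε ∩ AntidiagSet p)) := by
    ext M
    simp only [CnsPlusSet, CsPlusSet, Set.mem_inter_iff, Set.mem_union]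
    tauto
  have hdisj1 : Disjoint (CnsSet p ε ∩ CsSet p) (CnsSet p ε ∩ AntidiagSet p) :=
    (hdCsA.mono Set.inter_subset_right Set.inter_subset_right)
  have hdisj2 : Disjoint (CnsOtherSet p ε ∩ CsSet p) (CnsOtherSet p ε ∩ AntidiagSet p) :=
    (hdCsA.mono Set.inter_subset_right Set.inter_subset_right)
  have hdisj3 : Disjoint
      ((CnsSet p ε ∩ CsSet p) ∪ (CnsSet p ε ∩ AntidiagSet p))
      ((CnsOtherSet p ε ∩ CsSet p) ∪ (CnsOtherSet p ε ∩ AntidiagSet p)) := by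
    refine Set.disjoint_union_left.mpr ⟨?_, ?_⟩ <;>
      refine Set.disjoint_union_right.mpr ⟨?_, ?_⟩ <;>
      exact hd0.mono Set.inter_subset_left Set.inter_subset_left
  have cardInf : Nat.card (Hns ⊓ Hs : Subgroup (GL (Fin 2) (ZMod p))) = 4 * (p - 1) := by
    calc Nat.card (Hns ⊓ Hs : Subgroup (GL (Fin 2) (ZMod p)))
        = (((Hns ⊓ Hs : Subgroup (GL (Fin 2) (ZMod p))) : Set (GL (Fin 2) (ZMod p)))).ncard :=
          (Nat.card_coe_set_eq _).symm
      _ = (CnsPlusSet p ε ∩ CsPlusSet p).ncard := by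
          rw [Subgroup.coe_inf, hHns, hHs]
      _ = 4 * (p - 1) := by
          rw [hSdecomp, Set.ncard_union_eq hdisj3, Set.ncard_union_eq hdisj1,
            Set.ncard_union_eq hdisj2, ← Nat.card_coe_set_eq, ← Nat.card_coe_set_eq,
            ← Nat.card_coe_set_eq, ← Nat.card_coe_set_eq,
            card_P1 hε, card_P2 hε, card_P3 hε, card_P4 hε]
          ring
  -- index identity
  have hle : Hns ⊓ Hs ≤ Hns := inf_le_left
  have hcard_sub : Nat.card ((Hns ⊓ Hs).subgroupOf Hns) =
      Nat.card (Hns ⊓ Hs : Subgroup (GL (Fin 2) (ZMod p))) :=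
    Nat.card_congr (Subgroup.subgroupOfEquivOfLe hle).toEquiv
  have hkey : (Hns ⊓ Hs).relIndex Hns * Nat.card (Hns ⊓ Hs : Subgroup (GL (Fin 2) (ZMod p)))
      = Nat.card Hns := by
    rw [← hcard_sub]
    exact Subgroup.index_mul_card _
  -- arithmetic
  obtain ⟨k, hpk⟩ := hp
  have hk1 : 1 ≤ k := by
    have := (Fact.out : p.Prime).two_le
    omega
  have e1 : p ^ 2 - 1 = 4 * (k * (k + 1)) := by
    have : p ^ 2 = 4 * (k * (k + 1)) + 1 := by rw [hpk]; ring
    rw [this, Nat.add_sub_cancel]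
  have e2 : p - 1 = 2 * k := by omega
  have e3 : (p + 1) / 2 = k + 1 := by omega
  constructor
  · have hval : (Hns ⊓ Hs).relIndex Hns * (4 * (2 * k)) = 2 * (4 * (k * (k + 1))) := by
      rw [← e2, ← e1, ← cardInf, ← cardHns]
      exact hkey
    have heq : (Hns ⊓ Hs).relIndex Hns * (4 * (2 * k)) = (k + 1) * (4 * (2 * k)) := by
      rw [hval]; ring
    rw [e3]
    exact Nat.eq_of_mul_eq_mul_right (by omega) heq
  · rw [cardHns, cardInf, e1, e2, e3]; ring
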